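/- Let D ≥ 1 be an integer and let ξ : ℝ^D → ℝ be twice continuously differentiable with ξ(0) = 0, and strongly convex on ℝ_+^D, i.e. there exists λ > 0 such that x ↦ ξ(x) − (λ/2)|x|² is convex on ℝ_+^D. Then ξ* is differentiable on ℝ^D and for all x, y ∈ ℝ_+^D: (i) ∇ξ*(∇ξ(x)) = x; (ii) ∇ξ(∇ξ*(y)) − y ∈ ℝ_+^D; (iii) ∇ξ*(y) · (∇ξ(∇ξ*(y)) − y) = 0; (iv) ξ*(∇ξ(∇ξ*(y))) = ξ*(y). -/

import Mathlib

open MeasureTheory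

/-- The nonnegative orthant `ℝ_+^D` in `ℝ^D`. -/
def orthant (D : ℕ) : Set (EuclideanSpace ℝ (Fin D)) := {x | ∀ i, 0 ≤ x i}

/-- The monotone conjugate `ξ*(y) = sup_{x ∈ ℝ_+^D} (x·y − ξ(x))`, valued in `ℝ ∪ {+∞}`
(formalized as `EReal`). -/
noncomputable def monotoneConj (D : ℕ) (ξ : EuclideanSpace ℝ (Fin D) → ℝ)
    (y : EuclideanSpace ℝ (Fin D)) : EReal :=
  ⨆ x : orthant D, (((inner ℝ x.1 y : ℝ) - ξ x.1 : ℝ) : EReal)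

section AuxLemmas

open InnerProductSpace Filter Set Asymptotics

variable {E : Type*} [NormedAddCommGroup E] [InnerProductSpace ℝ E] [CompleteSpace E]

local notation "⟪" x ", " y "⟫" => @inner ℝ _ _ x y

lemma aux_isLittleO_sq (x : E) (C : ℝ) {g : E → ℝ}
    (hg : ∀ z, |g z| ≤ C * ‖z - x‖ ^ 2) :
    (fun z => g z) =o[nhds x] fun z => z - x := by
  rw [isLittleO_iff]
  intro c hc
  have : ∀ᶠ z in nhds x, ‖z - x‖ < c / (|C| + 1) := by
    have hcont : Continuous fun z : E => ‖z - x‖ := (continuous_id.sub continuous_const).norm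
    have h0 : (0:ℝ) < c / (|C| + 1) := by positivity
    have := hcont.tendsto x
    simp only [sub_self, norm_zero] at this
    exact this (Iio_mem_nhds h0)
  filter_upwards [this] with z hz
  have h1 : |g z| ≤ C * ‖z - x‖ ^ 2 := hg z
  have h2 : C * ‖z - x‖ ^ 2 ≤ (|C| + 1) * ‖z - x‖ * ‖z - x‖ := by
    have : C ≤ |C| + 1 := le_trans (le_abs_self C) (by linarith)
    nlinarith [norm_nonneg (z - x), abs_nonneg C]
  have h3 : (|C| + 1) * ‖z - x‖ ≤ c := by
    have hpos : (0:ℝ) < |C| + 1 := by positivity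
    have := (lt_div_iff₀ hpos).mp hz
    nlinarith
  calc ‖g z‖ = |g z| := rfl
    _ ≤ (|C| + 1) * ‖z - x‖ * ‖z - x‖ := le_trans h1 h2
    _ ≤ c * ‖z - x‖ := by nlinarith [norm_nonneg (z-x)]

lemma aux_hasGradientAt_normsq (c : ℝ) (x : E) :
    HasGradientAt (fun z : E => c / 2 * ‖z‖ ^ 2) (c • x) x := by
  rw [hasGradientAt_iff_isLittleO]
  have key : ∀ z : E, c / 2 * ‖z‖ ^ 2 - c / 2 * ‖x‖ ^ 2 - ⟪c • x, z - x⟫ = c / 2 * ‖z - x‖ ^ 2 := by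
    intro z
    rw [real_inner_smul_left, inner_sub_right, real_inner_self_eq_norm_sq,
      norm_sub_sq_real, real_inner_comm x z]
    ring
  refine aux_isLittleO_sq x |c/2| ?_
  intro z
  rw [key z, abs_mul, abs_pow, abs_norm]

lemma aux_hasGradientAt_sub {f g : E → ℝ} {G H x : E} (hf : HasGradientAt f G x)
    (hg : HasGradientAt g H x) : HasGradientAt (fun z => f z - g z) (G - H) x := by
  rw [hasGradientAt_iff_hasFDerivAt] at *
  rw [map_sub]; exact hf.sub hg

lemma aux_deriv_nonpos {F : ℝ → ℝ} {d : ℝ} (hF : HasDerivAt F d 0)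
    (h : ∀ t ∈ Set.Ioc (0:ℝ) 1, F t ≤ F 0) : d ≤ 0 := by
  have htend : Tendsto (slope F 0) (nhdsWithin 0 (Set.Ioi 0)) (nhds d) :=
    (hasDerivAt_iff_tendsto_slope.mp hF).mono_left
      (nhdsWithin_mono 0 (fun t ht => by exact ne_of_gt ht))
  refine le_of_tendsto htend ?_
  filter_upwards [Ioc_mem_nhdsGT_of_mem (Set.left_mem_Ico.mpr zero_lt_one)] with t ht
  rw [slope_def_field, div_eq_mul_inv]
  have h1 : F t - F 0 ≤ 0 := sub_nonpos.mpr (h t ht)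
  have h2 : (0:ℝ) < t := ht.1
  simp only [sub_zero]
  have := mul_nonpos_of_nonpos_of_nonneg h1 (le_of_lt (inv_pos.mpr h2))
  linarith [this]

lemma aux_convex_grad_ineq {s : Set E} {f : E → ℝ} (hc : ConvexOn ℝ s f) {x z : E}
    (hx : x ∈ s) (hz : z ∈ s) {G : E} (hG : HasGradientAt f G x) :
    f x + ⟪G, z - x⟫ ≤ f z := by
  set ψ : ℝ → ℝ := fun t => f (x + t • (z - x)) with hψdef
  have hline : HasDerivAt (fun t : ℝ => x + t • (z - x)) (z - x) 0 := by
    simpa using ((hasDerivAt_id (0:ℝ)).smul_const (z - x)).const_add x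
  have hψ : HasDerivAt ψ ⟪G, z - x⟫ 0 := by
    have hGf : HasFDerivAt f ((toDual ℝ E) G) (x + (0:ℝ) • (z - x)) := by
      simpa using hasGradientAt_iff_hasFDerivAt.mp hG
    have := hGf.comp_hasDerivAt 0 hline
    rw [toDual_apply_apply] at this; exact this
  have hψ0 : ψ 0 = f x := by simp [hψdef]
  have key : ∀ t ∈ Set.Ioc (0:ℝ) 1, (fun t => ψ t - t * (f z - f x)) t ≤
      (fun t => ψ t - t * (f z - f x)) 0 := by
    intro t ht
    simp only [hψ0, zero_mul, sub_zero]
    have hco : x + t • (z - x) = (1 - t) • x + t • z := by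
      rw [sub_smul, smul_sub, one_smul]; abel
    have := hc.2 hx hz (by linarith [ht.2] : (0:ℝ) ≤ 1 - t) (le_of_lt ht.1) (by ring)
    rw [smul_eq_mul, smul_eq_mul] at this
    rw [hψdef]
    simp only [hco]
    calc f ((1 - t) • x + t • z) - t * (f z - f x) ≤
        (1 - t) * f x + t * f z - t * (f z - f x) := by linarith
      _ = f x := by ring
  have hd : HasDerivAt (fun t => ψ t - t * (f z - f x)) (⟪G, z - x⟫ - (f z - f x)) 0 := by
    have h := hψ.sub ((hasDerivAt_id (0:ℝ)).mul_const (f z - f x)); simp only [one_mul] at h; exact h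
  have := aux_deriv_nonpos hd key
  linarith

end AuxLemmas

set_option maxHeartbeats 1000000 in
/-- if `ξ : ℝ^D → ℝ` is `C²` with `ξ(0) = 0` and strongly convex on `ℝ_+^D`, then
`ξ*` is (real-valued and) differentiable on `ℝ^D` and, for all `x, y ∈ ℝ_+^D`:
(i) `∇ξ*(∇ξ(x)) = x`; (ii) `∇ξ(∇ξ*(y)) − y ∈ ℝ_+^D`;
(iii) `∇ξ*(y)·(∇ξ(∇ξ*(y)) − y) = 0`; (iv) `ξ*(∇ξ(∇ξ*(y))) = ξ*(y)`. -/
theorem monotoneConj_strong_convexity (D : ℕ) (hD : 1 ≤ D)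
    (ξ : EuclideanSpace ℝ (Fin D) → ℝ)
    (hC2 : ContDiff ℝ 2 ξ) (hξ0 : ξ 0 = 0)
    (lam : ℝ) (hlam : 0 < lam)
    (hstrong : ConvexOn ℝ (orthant D) (fun x => ξ x - lam / 2 * ‖x‖ ^ 2)) :
    ∃ f : EuclideanSpace ℝ (Fin D) → ℝ,
      (∀ y, monotoneConj D ξ y = (f y : EReal)) ∧
      Differentiable ℝ f ∧
      (∀ x ∈ orthant D, gradient f (gradient ξ x) = x) ∧
      (∀ y ∈ orthant D, gradient ξ (gradient f y) - y ∈ orthant D) ∧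
      (∀ y ∈ orthant D, (inner ℝ (gradient f y) (gradient ξ (gradient f y) - y) : ℝ) = 0) ∧
      (∀ y ∈ orthant D, f (gradient ξ (gradient f y)) = f y) := by
  classical
  have hdiff : Differentiable ℝ ξ := hC2.differentiable (by norm_num)
  have hgradξ : ∀ x, HasGradientAt ξ (gradient ξ x) x := fun x =>
    (hdiff x).hasGradientAt
  have h0orth : (0 : EuclideanSpace ℝ (Fin D)) ∈ orthant D := fun i => le_refl 0
  have horth_closed : IsClosed (orthant D) := by
    have : orthant D = ⋂ i, (fun x : EuclideanSpace ℝ (Fin D) => x i) ⁻¹' Set.Ici 0 := by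
      ext x; simp [orthant, Set.mem_iInter]
    rw [this]
    exact isClosed_iInter fun i =>
      IsClosed.preimage (EuclideanSpace.proj i).continuous isClosed_Ici
  -- strong convexity gradient inequality for the shifted function
  have hstrong_grad : ∀ x ∈ orthant D, ∀ z ∈ orthant D,
      ξ x + (inner ℝ (gradient ξ x) (z - x) : ℝ) + lam / 2 * ‖z - x‖ ^ 2 ≤ ξ z := by
    intro x hx z hz
    have hG : HasGradientAt (fun w => ξ w - lam / 2 * ‖w‖ ^ 2) (gradient ξ x - lam • x) x :=
      aux_hasGradientAt_sub (hgradξ x) (aux_hasGradientAt_normsq lam x)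
    have := aux_convex_grad_ineq hstrong hx hz hG
    have hexp : (inner ℝ (gradient ξ x - lam • x) (z - x) : ℝ)
        = (inner ℝ (gradient ξ x) (z - x) : ℝ) - lam * ((inner ℝ x z : ℝ) - ‖x‖^2) := by
      simp only [inner_sub_left, inner_sub_right, real_inner_smul_left,
        real_inner_self_eq_norm_sq]
      ring
    rw [hexp] at this
    have hns : ‖z - x‖ ^ 2 = ‖z‖^2 - 2 * (inner ℝ z x : ℝ) + ‖x‖^2 := norm_sub_sq_real z x
    have hcomm : (inner ℝ x z : ℝ) = (inner ℝ z x : ℝ) := real_inner_comm z x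
    nlinarith [this]
  -- convexity gradient inequality for ξ itself
  have hconv_grad : ∀ x ∈ orthant D, ∀ z ∈ orthant D,
      ξ x + (inner ℝ (gradient ξ x) (z - x) : ℝ) ≤ ξ z := by
    intro x hx z hz
    have := hstrong_grad x hx z hz
    nlinarith [norm_nonneg (z - x), sq_nonneg ‖z - x‖]
  -- coercivity lower bound
  have hlb : ∀ x ∈ orthant D, (inner ℝ (gradient ξ 0) x : ℝ) + lam / 2 * ‖x‖ ^ 2 ≤ ξ x := by
    intro x hx
    have := hstrong_grad 0 h0orth x hx
    simpa [hξ0] using this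
  -- existence of the maximizer
  have hexists : ∀ y : EuclideanSpace ℝ (Fin D), ∃ x, x ∈ orthant D ∧
      ∀ z ∈ orthant D, (inner ℝ z y : ℝ) - ξ z ≤ (inner ℝ x y : ℝ) - ξ x := by
    intro y
    set b : ℝ := ‖y - gradient ξ 0‖ with hb
    set R : ℝ := 2 * b / lam + 1 with hR
    have hbnn : 0 ≤ b := norm_nonneg _
    have hRpos : 0 < R := by positivity
    set K : Set (EuclideanSpace ℝ (Fin D)) := orthant D ∩ Metric.closedBall 0 R with hK
    have hKcpt : IsCompact K := (isCompact_closedBall 0 R).inter_left horth_closed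
    have hKne : K.Nonempty := ⟨0, h0orth, by simp [le_of_lt hRpos]⟩
    have hcont : ContinuousOn (fun x : EuclideanSpace ℝ (Fin D) => (inner ℝ x y : ℝ) - ξ x) K :=
      ((continuous_id.inner continuous_const).sub hC2.continuous).continuousOn
    obtain ⟨x0, hx0K, hx0max⟩ := hKcpt.exists_isMaxOn hKne hcont
    refine ⟨x0, hx0K.1, ?_⟩
    intro z hz
    by_cases hzR : ‖z‖ ≤ R
    · exact hx0max ⟨hz, by simpa [Metric.mem_closedBall, dist_zero_right] using hzR⟩
    · push_neg at hzR
      have h1 : (inner ℝ z y : ℝ) - ξ z ≤ ‖z‖ * b - lam / 2 * ‖z‖ ^ 2 := by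
        have h2 := hlb z hz
        have h3 : (inner ℝ z y : ℝ) - (inner ℝ (gradient ξ 0) z : ℝ)
            = (inner ℝ z (y - gradient ξ 0) : ℝ) := by
          rw [inner_sub_right, real_inner_comm (gradient ξ 0) z]
        have h4 : (inner ℝ z (y - gradient ξ 0) : ℝ) ≤ ‖z‖ * b := by
          simpa [hb] using real_inner_le_norm z (y - gradient ξ 0)
        linarith
      have h5 : ‖z‖ * b - lam / 2 * ‖z‖ ^ 2 < 0 := by
        have : 2 * b / lam < ‖z‖ := by rw [hR] at hzR; linarith
        have hzpos : 0 < ‖z‖ := lt_trans hRpos hzR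
        have : 2 * b < lam * ‖z‖ := by
          rw [div_lt_iff₀ hlam] at this; linarith
        nlinarith
      have h6 : (0:ℝ) ≤ (inner ℝ x0 y : ℝ) - ξ x0 := by
        have := hx0max ⟨h0orth, by simp [le_of_lt hRpos]⟩
        simpa [hξ0] using this
      linarith
  choose X hXorth hXmax using hexists
  -- midpoint strong concavity and quadratic growth at the max
  have hquad : ∀ y, ∀ z ∈ orthant D,
      (inner ℝ z y : ℝ) - ξ z + lam / 4 * ‖z - X y‖ ^ 2 ≤ (inner ℝ (X y) y : ℝ) - ξ (X y) := by
    intro y z hz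
    set x : EuclideanSpace ℝ (Fin D) := X y with hx
    have hxo : x ∈ orthant D := hXorth y
    set m : EuclideanSpace ℝ (Fin D) := (1/2 : ℝ) • x + (1/2 : ℝ) • z with hm
    have hmo : m ∈ orthant D := by
      intro i
      have h1 := hxo i
      have h2 := hz i
      have : m i = (1/2 : ℝ) * x i + (1/2 : ℝ) * z i := by
        simp [hm, PiLp.add_apply, PiLp.smul_apply, smul_eq_mul]
      rw [this]; linarith
    have hcvx := hstrong.2 hxo hz (by norm_num : (0:ℝ) ≤ 1/2) (by norm_num : (0:ℝ) ≤ 1/2)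
      (by norm_num)
    rw [smul_eq_mul, smul_eq_mul] at hcvx
    -- ‖m‖² = (‖x‖² + ‖z‖²)/2 - ‖x - z‖²/4
    have hpar : ‖m‖ ^ 2 = (‖x‖^2 + ‖z‖^2) / 2 - ‖x - z‖^2 / 4 := by
      have h1 : m = (1/2 : ℝ) • (x + z) := by rw [hm, smul_add]
      have h2 : ‖m‖^2 = (1/4) * ‖x + z‖^2 := by
        rw [h1, norm_smul]
        simp
        ring
      have h3 : ‖x + z‖^2 = ‖x‖^2 + 2 * (inner ℝ x z : ℝ) + ‖z‖^2 := norm_add_sq_real x z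
      have h4 : ‖x - z‖^2 = ‖x‖^2 - 2 * (inner ℝ x z : ℝ) + ‖z‖^2 := norm_sub_sq_real x z
      rw [h2, h3]; linarith
    have hinner : (inner ℝ m y : ℝ) = (1/2) * (inner ℝ x y : ℝ) + (1/2) * (inner ℝ z y : ℝ) := by
      rw [hm, inner_add_left, real_inner_smul_left, real_inner_smul_left]
    have hmax := hXmax y m hmo
    rw [← hx] at hmax
    have hmle : (inner ℝ m y : ℝ) - ξ m ≤ (inner ℝ x y : ℝ) - ξ x := hmax
    have hnsr : ‖z - x‖ = ‖x - z‖ := norm_sub_rev z x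
    rw [hnsr]
    nlinarith [hcvx, hpar, hinner, hmle]
  -- Lipschitz continuity of the maximizer
  have hLip : ∀ y y', ‖X y - X y'‖ ≤ 2 / lam * ‖y - y'‖ := by
    intro y y'
    have hA := hquad y (X y') (hXorth y')
    have hB := hquad y' (X y) (hXorth y)
    rw [norm_sub_rev (X y') (X y)] at hA
    have hsum : lam / 2 * ‖X y - X y'‖ ^ 2 ≤ (inner ℝ (X y - X y') (y - y') : ℝ) := by
      have e1 : (inner ℝ (X y - X y') (y - y') : ℝ)
          = (inner ℝ (X y) y : ℝ) - (inner ℝ (X y) y' : ℝ)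
            - (inner ℝ (X y') y : ℝ) + (inner ℝ (X y') y' : ℝ) := by
        simp only [inner_sub_left, inner_sub_right]; ring
      rw [e1]
      linarith
    have hbound : (inner ℝ (X y - X y') (y - y') : ℝ) ≤ ‖X y - X y'‖ * ‖y - y'‖ :=
      real_inner_le_norm _ _
    have hnn : (0:ℝ) ≤ ‖X y - X y'‖ := norm_nonneg _
    rcases eq_or_lt_of_le hnn with h0 | h0
    · rw [← h0]
      exact mul_nonneg (div_nonneg (by norm_num) hlam.le) (norm_nonneg _)
    · rw [div_mul_eq_mul_div, le_div_iff₀ hlam]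
      nlinarith
  -- f and its gradient
  have hgradf : ∀ y, HasGradientAt
      (fun y => (inner ℝ (X y) y : ℝ) - ξ (X y)) (X y) y := by
    intro y
    rw [hasGradientAt_iff_isLittleO]
    refine aux_isLittleO_sq y (2 / lam) ?_
    intro z
    have hlow : (inner ℝ (X y) y : ℝ) - ξ (X y) + (inner ℝ (X y) (z - y) : ℝ)
        ≤ (inner ℝ (X z) z : ℝ) - ξ (X z) := by
      have := hXmax z (X y) (hXorth y)
      have e : (inner ℝ (X y) z : ℝ) = (inner ℝ (X y) y : ℝ) + (inner ℝ (X y) (z - y) : ℝ) := by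
        rw [inner_sub_right]; ring
      linarith [e, this]
    have hup : (inner ℝ (X z) z : ℝ) - ξ (X z)
        ≤ (inner ℝ (X y) y : ℝ) - ξ (X y) + (inner ℝ (X y) (z - y) : ℝ)
          + 2 / lam * ‖z - y‖ ^ 2 := by
      have h1 := hXmax y (X z) (hXorth z)
      have e : (inner ℝ (X z) z : ℝ) = (inner ℝ (X z) y : ℝ) + (inner ℝ (X z) (z - y) : ℝ) := by
        rw [inner_sub_right]; ring
      have e2 : (inner ℝ (X z) (z - y) : ℝ)
          = (inner ℝ (X y) (z - y) : ℝ) + (inner ℝ (X z - X y) (z - y) : ℝ) := by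
        rw [inner_sub_left]; ring
      have h2 : (inner ℝ (X z - X y) (z - y) : ℝ) ≤ ‖X z - X y‖ * ‖z - y‖ :=
        real_inner_le_norm _ _
      have h3 : ‖X z - X y‖ * ‖z - y‖ ≤ 2 / lam * ‖z - y‖ ^ 2 := by
        have := hLip z y
        have hn : (0:ℝ) ≤ ‖z - y‖ := norm_nonneg _
        nlinarith
      linarith [e, e2, h1, h2, h3]
    rw [abs_le]
    constructor
    · have : (0:ℝ) ≤ 2 / lam * ‖z - y‖ ^ 2 := by positivity
      linarith
    · linarith
  -- derivative along coordinate directions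
  have hmemline : ∀ y (i : Fin D) (t : ℝ), 0 ≤ X y i + t →
      X y + t • EuclideanSpace.single i (1:ℝ) ∈ orthant D := by
    intro y i t ht j
    have hxj := hXorth y j
    by_cases hj : j = i
    · subst hj
      simpa [PiLp.add_apply, PiLp.smul_apply, EuclideanSpace.single_apply] using ht
    · simpa [PiLp.add_apply, PiLp.smul_apply, EuclideanSpace.single_apply, hj] using hxj
  have hderiv : ∀ y (i : Fin D), HasDerivAt
      (fun t : ℝ => (inner ℝ (X y + t • EuclideanSpace.single i (1:ℝ)) y : ℝ)
        - ξ (X y + t • EuclideanSpace.single i (1:ℝ)))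
      (y i - (gradient ξ (X y)) i) 0 := by
    intro y i
    have hline : HasDerivAt (fun t : ℝ => X y + t • EuclideanSpace.single i (1:ℝ))
        (EuclideanSpace.single i (1:ℝ)) 0 := by
      simpa using ((hasDerivAt_id (0:ℝ)).smul_const (EuclideanSpace.single i (1:ℝ))).const_add (X y)
    have hF2 : HasDerivAt (fun t : ℝ => ξ (X y + t • EuclideanSpace.single i (1:ℝ)))
        ((gradient ξ (X y)) i) 0 := by
      have hGf : HasFDerivAt ξ ((InnerProductSpace.toDual ℝ _) (gradient ξ (X y)))
          (X y + (0:ℝ) • EuclideanSpace.single i (1:ℝ)) := by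
        simpa using hasGradientAt_iff_hasFDerivAt.mp (hgradξ (X y))
      have := hGf.comp_hasDerivAt 0 hline
      rw [InnerProductSpace.toDual_apply_apply, EuclideanSpace.inner_single_right] at this
      simp only [one_mul, star_trivial, RCLike.star_def] at this
      exact this
    have hF1 : HasDerivAt (fun t : ℝ =>
        (inner ℝ (X y + t • EuclideanSpace.single i (1:ℝ)) y : ℝ)) (y i) 0 := by
      have h0 : ∀ t : ℝ, (inner ℝ (X y + t • EuclideanSpace.single i (1:ℝ)) y : ℝ)
          = (inner ℝ (X y) y : ℝ) + t * y i := by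
        intro t
        rw [inner_add_left, real_inner_smul_left, EuclideanSpace.inner_single_left]
        simp
      simp only [h0]
      simpa using ((hasDerivAt_id (0:ℝ)).mul_const (y i)).const_add ((inner ℝ (X y) y : ℝ))
    exact hF1.sub hF2
  have h00 : ∀ y (i : Fin D), X y + (0:ℝ) • EuclideanSpace.single i (1:ℝ) = X y := by
    intro y i; simp
  have hKKT1 : ∀ y, ∀ i : Fin D, y i ≤ (gradient ξ (X y)) i := by
    intro y i
    have hle := aux_deriv_nonpos (hderiv y i) ?_
    · linarith
    · intro t ht
      have hmem : X y + t • EuclideanSpace.single i (1:ℝ) ∈ orthant D :=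
        hmemline y i t (by linarith [hXorth y i, ht.1.le])
      have := hXmax y _ hmem
      simpa [h00 y i] using this
  have hKKT2 : ∀ y, ∀ i : Fin D, 0 < X y i → (gradient ξ (X y)) i = y i := by
    intro y i hpos
    have hloc : IsLocalMax (fun t : ℝ =>
        (inner ℝ (X y + t • EuclideanSpace.single i (1:ℝ)) y : ℝ)
          - ξ (X y + t • EuclideanSpace.single i (1:ℝ))) 0 := by
      have hball : Set.Ioo (-(X y i)) (X y i) ∈ nhds (0:ℝ) :=
        Ioo_mem_nhds (by linarith) hpos
      filter_upwards [hball] with t ht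
      have hmem : X y + t • EuclideanSpace.single i (1:ℝ) ∈ orthant D :=
        hmemline y i t (by linarith [ht.1])
      have := hXmax y _ hmem
      simpa [h00 y i] using this
    have := hloc.hasDerivAt_eq_zero (hderiv y i)
    linarith [this]
  -- uniqueness: the maximizer at ∇ξ(x) is x itself, for x in the orthant
  have huniq : ∀ x ∈ orthant D, X (gradient ξ x) = x := by
    intro x hx
    have hmaxx : (inner ℝ (X (gradient ξ x)) (gradient ξ x) : ℝ) - ξ (X (gradient ξ x))
        ≤ (inner ℝ x (gradient ξ x) : ℝ) - ξ x := by
      have hcg := hconv_grad x hx (X (gradient ξ x)) (hXorth _)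
      have e : (inner ℝ (gradient ξ x) (X (gradient ξ x) - x) : ℝ)
          = (inner ℝ (X (gradient ξ x)) (gradient ξ x) : ℝ)
            - (inner ℝ x (gradient ξ x) : ℝ) := by
        rw [inner_sub_right, real_inner_comm (X (gradient ξ x)) (gradient ξ x),
          real_inner_comm x (gradient ξ x)]
      linarith [e, hcg]
    have hq := hquad (gradient ξ x) x hx
    have hsq : ‖x - X (gradient ξ x)‖ ^ 2 ≤ 0 := by nlinarith
    have hz : ‖x - X (gradient ξ x)‖ = 0 := by
      nlinarith [norm_nonneg (x - X (gradient ξ x)), sq_nonneg ‖x - X (gradient ξ x)‖]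
    have := norm_sub_eq_zero_iff.mp hz
    exact this.symm
  -- inner product as a sum of coordinates
  have hinner_sum : ∀ a b : EuclideanSpace ℝ (Fin D), (inner ℝ a b : ℝ) = ∑ i, a i * b i := by
    intro a b; rw [PiLp.inner_apply]; simp [RCLike.inner_apply, mul_comm]
  -- complementary slackness
  have hcs : ∀ y, (inner ℝ (X y) (gradient ξ (X y) - y) : ℝ) = 0 := by
    intro y
    rw [hinner_sum]
    apply Finset.sum_eq_zero
    intro i _
    have hsub : (gradient ξ (X y) - y) i = (gradient ξ (X y)) i - y i := by
      simp [PiLp.sub_apply]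
    rcases (hXorth y i).eq_or_lt with h | h
    · rw [← h]; ring
    · rw [hsub, hKKT2 y i h]; ring
  have hfg : ∀ y, gradient (fun y => (inner ℝ (X y) y : ℝ) - ξ (X y)) y = X y := fun y =>
    (hgradf y).gradient
  refine ⟨fun y => (inner ℝ (X y) y : ℝ) - ξ (X y), ?_, ?_, ?_, ?_, ?_, ?_⟩
  · -- the sup is attained
    intro y
    unfold monotoneConj
    apply le_antisymm
    · exact iSup_le fun z => by exact_mod_cast hXmax y z.1 z.2
    · exact le_iSup_of_le ⟨X y, hXorth y⟩ le_rfl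
  · exact fun y => (hgradf y).differentiableAt
  · intro x hx
    rw [hfg]
    exact huniq x hx
  · intro y hy
    rw [hfg]
    intro i
    have hsub : (gradient ξ (X y) - y) i = (gradient ξ (X y)) i - y i := by
      simp [PiLp.sub_apply]
    show 0 ≤ (gradient ξ (X y) - y) i
    rw [hsub]
    linarith [hKKT1 y i]
  · intro y hy
    rw [hfg]
    exact hcs y
  · intro y hy
    rw [hfg]
    have hXX : X (gradient ξ (X y)) = X y := huniq (X y) (hXorth y)
    show (inner ℝ (X (gradient ξ (X y))) (gradient ξ (X y)) : ℝ) - ξ (X (gradient ξ (X y)))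
      = (inner ℝ (X y) y : ℝ) - ξ (X y)
    rw [hXX]
    have e : (inner ℝ (X y) (gradient ξ (X y)) : ℝ)
        = (inner ℝ (X y) y : ℝ) + (inner ℝ (X y) (gradient ξ (X y) - y) : ℝ) := by
      rw [inner_sub_right]; ring
    rw [e, hcs y]; ring
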